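/- (Expander lower bound on tilted cut.) Let F be an induced subgraph of G on vertex set U such that every vertex i ∈ U has at most b neighbors outside U, and the subgraph induced by U is a (δ,λ) vertex-expander: every S ⊆ U with |S| ≤ δ|U| satisfies cut(S, U∖S) ≥ λ|S|. Then, with h^F_i = h_i + deg_{G∖F}(i) ≤ h_max + b, choosing Ω = {S ⊆ U : |S| < ⌊δ|U|⌋} gives Δ(F; h^F) ≥ (λ − h_max − b)·⌊δ|U|⌋, hence Γ_*(G;h) ≥ (λ − h_max − b)·⌊δ|U|⌋. -/

import Mathlib

open Finset

variable {V : Type*} [Fintype V] [DecidableEq V]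

/-- Number of edges of `G` inside the induced subgraph on `W` with exactly one endpoint
in `S` (for `S ⊆ W`): `cut(S, W∖S)`. -/
def cutW (G : SimpleGraph V) [DecidableRel G.Adj] (W S : Finset V) : ℕ :=
  ((S ×ˢ (W \ S)).filter fun p => G.Adj p.1 p.2).card

/-- Number of neighbors of `i` outside `W`. -/
def degOut (G : SimpleGraph V) [DecidableRel G.Adj] (W : Finset V) (i : V) : ℕ :=
  (Finset.univ.filter fun j => G.Adj i j ∧ j ∉ W).card

/-- The tilted cut `Δ(F;h')` of the subgraph of `G` induced by `W`. -/
noncomputable def tiltedCutOn (G : SimpleGraph V) [DecidableRel G.Adj]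
    (W : Finset V) (h' : V → ℝ) : ℝ :=
  sSup {d : ℝ | ∃ Ω : Finset (Finset V), (∀ S ∈ Ω, S ⊆ W) ∧ ∅ ∈ Ω ∧ W ∉ Ω ∧
    (∀ S ∈ Ω, ∀ S' ⊆ S, S' ∈ Ω) ∧
    d = sInf {e : ℝ | ∃ S ∈ Ω, ∃ i ∈ W, i ∉ S ∧ insert i S ∉ Ω ∧
      e = max ((cutW G W S : ℝ) - ∑ j ∈ S, h' j)
            ((cutW G W (insert i S) : ℝ) - ∑ j ∈ insert i S, h' j)}}

/-- `Γ_*(G;h) = max_F Δ(F;h^F)` over induced subgraphs `F` of `G`, where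
`h^F_i = h_i + deg_{G∖F}(i)`. -/
noncomputable def GammaStar (G : SimpleGraph V) [DecidableRel G.Adj] (h : V → ℝ) : ℝ :=
  sSup {d : ℝ | ∃ W : Finset V,
    d = tiltedCutOn G W fun i => h i + (degOut G W i : ℝ)}

/-- Expander lower bound on the tilted cut: if every vertex of `U` has at most `b`
neighbors outside `U` and the subgraph induced by `U` is a `(δ,λ)` vertex expander,
then `Δ(F;h^F) ≥ (λ − h_max − b)·⌊δ|U|⌋`, hence `Γ_*(G;h) ≥ (λ − h_max − b)·⌊δ|U|⌋`. -/
theorem expander_tiltedCut_lower_bound (G : SimpleGraph V) [DecidableRel G.Adj]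
    (h : V → ℝ) (hmax b lam δ : ℝ) (hδ : 0 < δ) (hlam : 0 < lam)
    (hhm : ∀ i, h i ≤ hmax)
    (U : Finset V) (hU : U.Nonempty)
    (hb : ∀ i ∈ U, (degOut G U i : ℝ) ≤ b)
    (hexpand : ∀ S ⊆ U, (S.card : ℝ) ≤ δ * U.card → lam * S.card ≤ (cutW G U S : ℝ)) :
    (lam - hmax - b) * (⌊δ * (U.card : ℝ)⌋₊ : ℝ) ≤
        tiltedCutOn G U (fun i => h i + (degOut G U i : ℝ)) ∧
    (lam - hmax - b) * (⌊δ * (U.card : ℝ)⌋₊ : ℝ) ≤ GammaStar G h := by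
  classical
  set m := ⌊δ * (U.card : ℝ)⌋₊ with hm
  set M := max m 1 with hM
  have hδU : (0:ℝ) ≤ δ * U.card := by positivity
  have hUpos : 0 < U.card := hU.card_pos
  -- m ≤ U.card
  have hm_le : m ≤ U.card := by
    by_contra hc
    push_neg at hc
    have h1 : (U.card : ℝ) ≤ δ * U.card := by
      have h2 := Nat.floor_le hδU
      calc (U.card:ℝ) ≤ m := by exact_mod_cast hc.le
        _ ≤ δ * U.card := h2
    have h2 := hexpand U le_rfl h1
    have h3 : cutW G U U = 0 := by simp [cutW]
    rw [h3] at h2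
    have h4 : (0:ℝ) < lam * U.card := by
      have : (0:ℝ) < U.card := by exact_mod_cast hUpos
      positivity
    simp only [Nat.cast_zero] at h2
    linarith
  have hM_le : M ≤ U.card := max_le hm_le hUpos
  have h1M : 1 ≤ M := le_max_right _ _
  set Om : Finset (Finset V) := U.powerset.filter (fun S => S.card < M) with hOm
  have hmemOm : ∀ S : Finset V, S ∈ Om ↔ S ⊆ U ∧ S.card < M := by
    intro S; simp [hOm, Finset.mem_filter, Finset.mem_powerset]
  set h' : V → ℝ := fun i => h i + (degOut G U i : ℝ) with hh'
  set eSet : Set ℝ := {e : ℝ | ∃ S ∈ Om, ∃ i ∈ U, i ∉ S ∧ insert i S ∉ Om ∧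
      e = max ((cutW G U S : ℝ) - ∑ j ∈ S, h' j)
            ((cutW G U (insert i S) : ℝ) - ∑ j ∈ insert i S, h' j)} with heSet
  -- sum bound
  have hsum : ∀ S' ⊆ U, ∑ j ∈ S', h' j ≤ S'.card * (hmax + b) := by
    intro S' hS'
    have h5 := Finset.sum_le_card_nsmul S' h' (hmax + b)
      (fun j hj => add_le_add (hhm j) (hb j (hS' hj)))
    rw [nsmul_eq_mul] at h5
    exact h5
  -- every element of eSet is at least the target
  have key : ∀ e ∈ eSet, (lam - hmax - b) * (m:ℝ) ≤ e := by
    rintro e ⟨S, hSOm, i, hiU, hiS, hins, rfl⟩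
    obtain ⟨hSU, hScard⟩ := (hmemOm S).1 hSOm
    have hinsU : insert i S ⊆ U := Finset.insert_subset hiU hSU
    have hinscard : (insert i S).card = S.card + 1 := Finset.card_insert_of_notMem hiS
    have hScardM : S.card + 1 = M := by
      have h6 : ¬ ((insert i S).card < M) := fun hlt => hins ((hmemOm _).2 ⟨hinsU, hlt⟩)
      omega
    rcases Nat.eq_zero_or_pos m with hm0 | hmpos
    · -- m = 0 : target is 0, use the first component with S = ∅
      have hS0 : S = ∅ := by
        have : S.card = 0 := by omega
        exact Finset.card_eq_zero.mp this
      have hc0 : cutW G U S = 0 := by simp [cutW, hS0]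
      have : (lam - hmax - b) * (m:ℝ) = 0 := by rw [hm0]; simp
      rw [this]
      refine le_trans ?_ (le_max_left _ _)
      rw [hc0, hS0]
      simp
    · -- m ≥ 1 : M = m, use the second component
      have hMm : M = m := max_eq_left hmpos
      have hcard' : (insert i S).card = m := by omega
      have hfle : ((insert i S).card : ℝ) ≤ δ * U.card := by
        rw [hcard']; exact Nat.floor_le hδU
      have hcut := hexpand (insert i S) hinsU hfle
      rw [hcard'] at hcut
      have hsb := hsum (insert i S) hinsU
      rw [hcard'] at hsb
      refine le_trans ?_ (le_max_right _ _)
      nlinarith [hcut, hsb]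
  -- eSet is nonempty
  have hne : eSet.Nonempty := by
    obtain ⟨S, hSU, hScard⟩ := Finset.exists_subset_card_eq (s := U) (n := M - 1)
      (le_trans (Nat.sub_le _ _) hM_le)
    have hsd : (U \ S).Nonempty := by
      rw [← Finset.card_pos, Finset.card_sdiff_of_subset hSU]
      omega
    obtain ⟨i, hi⟩ := hsd
    have hiU : i ∈ U := (Finset.mem_sdiff.1 hi).1
    have hiS : i ∉ S := (Finset.mem_sdiff.1 hi).2
    refine ⟨_, S, (hmemOm S).2 ⟨hSU, by omega⟩, i, hiU, hiS, ?_, rfl⟩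
    intro hmem
    have := ((hmemOm _).1 hmem).2
    rw [Finset.card_insert_of_notMem hiS] at this
    omega
  have hdle : (lam - hmax - b) * (m:ℝ) ≤ sInf eSet := le_csInf hne key
  -- membership of sInf eSet in the defining set of tiltedCutOn
  have hOmem : (∀ S ∈ Om, S ⊆ U) ∧ ∅ ∈ Om ∧ U ∉ Om ∧
      (∀ S ∈ Om, ∀ S' ⊆ S, S' ∈ Om) ∧
      sInf eSet = sInf {e : ℝ | ∃ S ∈ Om, ∃ i ∈ U, i ∉ S ∧ insert i S ∉ Om ∧
        e = max ((cutW G U S : ℝ) - ∑ j ∈ S, h' j)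
              ((cutW G U (insert i S) : ℝ) - ∑ j ∈ insert i S, h' j)} := by
    refine ⟨fun S hS => ((hmemOm S).1 hS).1, ?_, ?_, ?_, rfl⟩
    · exact (hmemOm ∅).2 ⟨Finset.empty_subset U, by rw [Finset.card_empty]; omega⟩
    · intro hUin
      have := ((hmemOm U).1 hUin).2
      omega
    · intro S hS S' hS'
      obtain ⟨hSU, hc⟩ := (hmemOm S).1 hS
      exact (hmemOm S').2 ⟨hS'.trans hSU, lt_of_le_of_lt (Finset.card_le_card hS') hc⟩
  have hbdd : BddAbove {d : ℝ | ∃ Ω : Finset (Finset V), (∀ S ∈ Ω, S ⊆ U) ∧ ∅ ∈ Ω ∧ U ∉ Ω ∧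
      (∀ S ∈ Ω, ∀ S' ⊆ S, S' ∈ Ω) ∧
      d = sInf {e : ℝ | ∃ S ∈ Ω, ∃ i ∈ U, i ∉ S ∧ insert i S ∉ Ω ∧
        e = max ((cutW G U S : ℝ) - ∑ j ∈ S, h' j)
              ((cutW G U (insert i S) : ℝ) - ∑ j ∈ insert i S, h' j)}} := by
    apply Set.Finite.bddAbove
    apply Set.Finite.subset (Set.finite_range (fun Ω : Finset (Finset V) =>
      sInf {e : ℝ | ∃ S ∈ Ω, ∃ i ∈ U, i ∉ S ∧ insert i S ∉ Ω ∧
        e = max ((cutW G U S : ℝ) - ∑ j ∈ S, h' j)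
              ((cutW G U (insert i S) : ℝ) - ∑ j ∈ insert i S, h' j)}))
    rintro d ⟨Ω, -, -, -, -, rfl⟩
    exact ⟨Ω, rfl⟩
  have hmain : (lam - hmax - b) * (m:ℝ) ≤ tiltedCutOn G U h' := by
    refine le_trans hdle (le_csSup hbdd ⟨Om, hOmem⟩)
  refine ⟨hmain, le_trans hmain ?_⟩
  -- GammaStar part
  have hbddG : BddAbove {d : ℝ | ∃ W : Finset V,
      d = tiltedCutOn G W fun i => h i + (degOut G W i : ℝ)} := by
    apply Set.Finite.bddAbove
    apply Set.Finite.subset (Set.finite_range (fun W : Finset V =>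
      tiltedCutOn G W fun i => h i + (degOut G W i : ℝ)))
    rintro d ⟨W, rfl⟩
    exact ⟨W, rfl⟩
  exact le_csSup hbddG ⟨U, rfl⟩
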